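/- For every (0,k,ℓ) ∈ X_diff (i.e. k ≥ 1 and k + ℓ ≤ C₁), the boundary value of the difference function is D(0,k,ℓ) = h₁/μ₁ − (max(ℓ+1, C₂)/C₂)·(h₂/μ₂); equivalently, D(0,k,ℓ) = h₁/μ₁ − h₂/μ₂ if ℓ < C₂ and D(0,k,ℓ) = h₁/μ₁ − (ℓ+1)·h₂/(C₂·μ₂) if ℓ ≥ C₂. -/

import Mathlib

/-- Overall service rate `d(k,ℓ) = k·μ₁ + min(ℓ,C₂)·μ₂`. -/
noncomputable def dRate (C₂ : ℕ) (μ₁ μ₂ : ℝ) (k ℓ : ℕ) : ℝ :=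
  (k : ℝ) * μ₁ + ((min ℓ C₂ : ℕ) : ℝ) * μ₂

/-- Membership of `(i,k,ℓ)` in the state space `X`. -/
def memX (C₁ : ℕ) (i k ℓ : ℕ) : Prop :=
  (i = 0 ∧ k + ℓ < C₁) ∨ k + ℓ = C₁

/-- `v` satisfies the optimality (Bellman) equations of the clearing system.
Terms whose coefficient `k·μ₁` or `min(ℓ,C₂)·μ₂` vanishes contribute `0`,
matching the convention that such summands are omitted. -/
def IsValue (C₁ C₂ : ℕ) (μ₁ μ₂ h₀ h₁ h₂ : ℝ) (v : ℕ → ℕ → ℕ → ℝ) : Prop :=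
  v 0 0 0 = 0 ∧
  (∀ k ℓ : ℕ, k + ℓ ≤ C₁ → ¬(k = 0 ∧ ℓ = 0) →
    v 0 k ℓ = ((k : ℝ) * h₁ + (ℓ : ℝ) * h₂) / dRate C₂ μ₁ μ₂ k ℓ
      + ((k : ℝ) * μ₁ / dRate C₂ μ₁ μ₂ k ℓ) * v 0 (k - 1) ℓ
      + (((min ℓ C₂ : ℕ) : ℝ) * μ₂ / dRate C₂ μ₁ μ₂ k ℓ) * v 0 k (ℓ - 1)) ∧
  (∀ i k ℓ : ℕ, k + ℓ = C₁ →
    v (i + 1) k ℓ =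
      (((i : ℝ) + 1) * h₀ + (k : ℝ) * h₁ + (ℓ : ℝ) * h₂) / dRate C₂ μ₁ μ₂ k ℓ
      + ((k : ℝ) * μ₁ / dRate C₂ μ₁ μ₂ k ℓ) *
          min (v i k ℓ) (v i (k - 1) (ℓ + 1))
      + (((min ℓ C₂ : ℕ) : ℝ) * μ₂ / dRate C₂ μ₁ μ₂ k ℓ) *
          min (v i (k + 1) (ℓ - 1)) (v i k ℓ))

/-- The difference `D(i,k,ℓ) = v(i,k,ℓ) − v(i,k−1,ℓ+1)`. -/
noncomputable def Dv (v : ℕ → ℕ → ℕ → ℝ) (i k ℓ : ℕ) : ℝ :=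
  v i k ℓ - v i (k - 1) (ℓ + 1)

/-- Auxiliary holding-cost sum `g(ℓ) = Σ_{j=1}^{ℓ} j·h₂/(min(j,C₂)·μ₂)`. -/
noncomputable def gAux (C₂ : ℕ) (μ₂ h₂ : ℝ) : ℕ → ℝ
  | 0 => 0
  | (n+1) => gAux C₂ μ₂ h₂ n + ((n : ℝ) + 1) * h₂ / (((min (n+1) C₂ : ℕ) : ℝ) * μ₂)

lemma closed_form
    (C₁ C₂ : ℕ) (hC₂pos : 1 ≤ C₂)
    (μ₁ μ₂ h₀ h₁ h₂ : ℝ)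
    (hμ₁ : 0 < μ₁) (hμ₂ : 0 < μ₂)
    (v : ℕ → ℕ → ℕ → ℝ) (hv : IsValue C₁ C₂ μ₁ μ₂ h₀ h₁ h₂ v) :
    ∀ ℓ k : ℕ, k + ℓ ≤ C₁ → v 0 k ℓ = (k : ℝ) * h₁ / μ₁ + gAux C₂ μ₂ h₂ ℓ := by
  obtain ⟨h0, hrec, -⟩ := hv
  intro ℓ
  induction ℓ with
  | zero =>
    intro k
    induction k with
    | zero => intro _; simpa [gAux] using h0
    | succ k ihk =>
      intro hle
      have hk : k + 0 ≤ C₁ := by omega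
      have hd : dRate C₂ μ₁ μ₂ (k+1) 0 = ((k:ℝ)+1) * μ₁ := by
        simp [dRate]
      have hdne : ((k:ℝ)+1) * μ₁ ≠ 0 := by positivity
      have := hrec (k+1) 0 hle (by simp)
      rw [this, hd]
      simp only [Nat.add_sub_cancel, ihk hk, gAux, Nat.min_self, Nat.zero_min]
      push_cast
      field_simp
      ring
  | succ ℓ ihℓ =>
    intro k
    have hm1 : 1 ≤ min (ℓ+1) C₂ := by omega
    have hmne : ((min (ℓ+1) C₂ : ℕ) : ℝ) ≠ 0 := by
      have : (0:ℝ) < ((min (ℓ+1) C₂ : ℕ) : ℝ) := by exact_mod_cast hm1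
      linarith
    induction k with
    | zero =>
      intro hle
      have hd : dRate C₂ μ₁ μ₂ 0 (ℓ+1) = ((min (ℓ+1) C₂ : ℕ) : ℝ) * μ₂ := by
        simp [dRate]
      have hdne : ((min (ℓ+1) C₂ : ℕ) : ℝ) * μ₂ ≠ 0 := by
        exact mul_ne_zero hmne (ne_of_gt hμ₂)
      have := hrec 0 (ℓ+1) hle (by simp)
      rw [this, hd]
      have hprev : v 0 0 ℓ = gAux C₂ μ₂ h₂ ℓ := by
        simpa using ihℓ 0 (by omega)
      simp only [Nat.add_sub_cancel] at hprev ⊢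
      rw [hprev]
      simp only [gAux, Nat.cast_zero]
      field_simp
      push_cast
      ring
    | succ k ihk =>
      intro hle
      have hd : dRate C₂ μ₁ μ₂ (k+1) (ℓ+1)
          = ((k:ℝ)+1) * μ₁ + ((min (ℓ+1) C₂ : ℕ) : ℝ) * μ₂ := by
        simp [dRate]
      have hdne : ((k:ℝ)+1) * μ₁ + ((min (ℓ+1) C₂ : ℕ) : ℝ) * μ₂ ≠ 0 := by
        have h1 : (0:ℝ) < ((k:ℝ)+1) * μ₁ := by positivity
        have h2 : (0:ℝ) < ((min (ℓ+1) C₂ : ℕ) : ℝ) * μ₂ := by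
          apply mul_pos _ hμ₂
          exact_mod_cast hm1
        linarith
      have := hrec (k+1) (ℓ+1) hle (by simp)
      rw [this, hd]
      have hA : v 0 k (ℓ+1) = (k : ℝ) * h₁ / μ₁ + gAux C₂ μ₂ h₂ (ℓ+1) := by
        apply ihk; omega
      have hB : v 0 (k+1) ℓ = ((k+1 : ℕ) : ℝ) * h₁ / μ₁ + gAux C₂ μ₂ h₂ ℓ := by
        apply ihℓ (k+1); omega
      simp only [Nat.add_sub_cancel]
      rw [hA, hB]
      simp only [gAux]
      push_cast
      field_simp
      ring

theorem stmt8
    (C₁ C₂ : ℕ) (hC₂pos : 1 ≤ C₂) (hC : C₂ < C₁)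
    (μ₁ μ₂ h₀ h₁ h₂ : ℝ)
    (hμ₁ : 0 < μ₁) (hμ₂ : 0 < μ₂)
    (hh₀ : 0 < h₀) (hh₁ : 0 < h₁) (hh₂ : 0 < h₂)
    (v : ℕ → ℕ → ℕ → ℝ) (hv : IsValue C₁ C₂ μ₁ μ₂ h₀ h₁ h₂ v)
 :
    ∀ k ℓ : ℕ, 1 ≤ k → k + ℓ ≤ C₁ →
      Dv v 0 k ℓ = h₁ / μ₁ - ((max (ℓ + 1) C₂ : ℕ) : ℝ) / (C₂ : ℝ) * (h₂ / μ₂) := by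
  intro k ℓ hk hle
  obtain ⟨k, rfl⟩ : ∃ k', k = k' + 1 := ⟨k - 1, by omega⟩
  have h1 : v 0 (k+1) ℓ = ((k+1 : ℕ) : ℝ) * h₁ / μ₁ + gAux C₂ μ₂ h₂ ℓ :=
    closed_form C₁ C₂ hC₂pos μ₁ μ₂ h₀ h₁ h₂ hμ₁ hμ₂ v hv ℓ (k+1) hle
  have h2 : v 0 k (ℓ+1) = (k : ℝ) * h₁ / μ₁ + gAux C₂ μ₂ h₂ (ℓ+1) :=
    closed_form C₁ C₂ hC₂pos μ₁ μ₂ h₀ h₁ h₂ hμ₁ hμ₂ v hv (ℓ+1) k (by omega)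
  have hC₂ne : ((C₂ : ℕ) : ℝ) ≠ 0 := by
    have : (0:ℝ) < (C₂:ℝ) := by exact_mod_cast hC₂pos
    linarith
  simp only [Dv, Nat.add_sub_cancel, h1, h2, gAux]
  rcases le_total (ℓ+1) C₂ with h | h
  · rw [min_eq_left h, max_eq_right h]
    have hne : ((ℓ:ℝ)+1) ≠ 0 := by positivity
    push_cast
    field_simp
    ring
  · rw [min_eq_right h, max_eq_left h]
    push_cast
    field_simp
    ring
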